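/- arXiv:2301.02876 — 5 statements merged into one kernel-verified Lean document; each statement's English description precedes it below -/
import Mathlib

section
/- If a saturated assignment P has a non-integrated type-2 vertex and there exists a type-1 vertex x such that every type-2 neighbor of x is adjacent to some other type-1 vertex, then the set of non-integrated type-2 vertices forms an independent set in G. -/
open Finset
open scoped Classical

variable {V : Type*}

/-- A vertex `v` is integrated under assignment `P` (type-1 = `true`,
type-2 = `false`) if it has a neighbor of the other type. -/
def Integrated (G : SimpleGraph V) (P : V → Bool) (v : V) : Prop :=
  ∃ u, G.Adj v u ∧ P u ≠ P v

/-- The index of agent integration: the number of integrated vertices. -/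
noncomputable def IoA (G : SimpleGraph V) [Fintype V] (P : V → Bool) : ℕ :=
  (Finset.univ.filter fun v => Integrated G P v).card

/-- Swap the types of vertices `x` and `y`. -/
noncomputable def swapAssign (P : V → Bool) (x y : V) : V → Bool :=
  fun v => if v = x then P y else if v = y then P x else P v

/-- An assignment is saturated if no swap of types between a type-1 vertex and a
type-2 vertex strictly increases the number of integrated vertices. -/
def Saturated (G : SimpleGraph V) [Fintype V] (P : V → Bool) : Prop :=
  ∀ x y, P x = true → P y = false → IoA G (swapAssign P x y) ≤ IoA G P

/-- Under Subcase 2.2, the non-integrated type-2 vertices form an independent set. -/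
theorem stmt3 [Fintype V] (G : SimpleGraph V) (P : V → Bool)
    (hsat : Saturated G P)
    (hy : ∃ y, P y = false ∧ ¬ Integrated G P y)
    (hx : ∃ x, P x = true ∧ ∀ y, G.Adj x y → P y = false →
      ∃ x', x' ≠ x ∧ P x' = true ∧ G.Adj y x') :
    ∀ u v, P u = false → ¬ Integrated G P u →
      P v = false → ¬ Integrated G P v → ¬ G.Adj u v := by
  obtain ⟨x, hxT, hxprop⟩ := hx
  intro u v huF hnu hvF hnv hadj
  have hux : u ≠ x := fun h => by rw [h, hxT] at huF; exact Bool.noConfusion huF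
  have hvx : v ≠ x := fun h => by rw [h, hxT] at hvF; exact Bool.noConfusion hvF
  have huv : u ≠ v := G.ne_of_adj hadj
  have hNu : ∀ z, G.Adj u z → P z = false := by
    intro z hz
    by_contra h
    exact hnu ⟨z, hz, by rw [huF]; simpa using h⟩
  set Q := swapAssign P x u with hQ
  have hQx : Q x = false := by simp [hQ, swapAssign, huF]
  have hQu : Q u = true := by simp [hQ, swapAssign, hux, hxT]
  have hQother : ∀ w, w ≠ x → w ≠ u → Q w = P w := by
    intro w h1 h2; simp [hQ, swapAssign, h1, h2]
  -- every vertex integrated under P, other than x, is integrated under Q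
  have hkeep : ∀ w, w ≠ x → Integrated G P w → Integrated G Q w := by
    rintro w hwx ⟨z, hwz, hz⟩
    cases hw : P w with
    | false =>
      have hzT : P z = true := by
        cases hzc : P z with
        | false => exact absurd (hzc.trans hw.symm) hz
        | true => rfl
      have hwu : w ≠ u := by
        intro h; rw [h] at hwz
        rw [hNu z hwz] at hzT; exact Bool.noConfusion hzT
      by_cases hzx : z = x
      · subst hzx
        obtain ⟨x', hx'x, hx'T, hwx'⟩ := hxprop w hwz.symm hw
        have hx'u : x' ≠ u := fun h => by rw [h, huF] at hx'T; exact Bool.noConfusion hx'T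
        refine ⟨x', hwx', ?_⟩
        rw [hQother x' hx'x hx'u, hQother w hwx hwu, hx'T, hw]; simp
      · have hzu : z ≠ u := fun h => by rw [h, huF] at hzT; exact Bool.noConfusion hzT
        refine ⟨z, hwz, ?_⟩
        rw [hQother z hzx hzu, hQother w hwx hwu, hzT, hw]; simp
    | true =>
      have hzF : P z = false := by
        cases hzc : P z with
        | true => exact absurd (hzc.trans hw.symm) hz
        | false => rfl
      have hwu : w ≠ u := fun h => by rw [h, huF] at hw; exact Bool.noConfusion hw
      have hzx : z ≠ x := fun h => by rw [h, hxT] at hzF; exact Bool.noConfusion hzF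
      have hzu : z ≠ u := by
        intro h; rw [h] at hwz
        rw [hNu w hwz.symm] at hw; exact Bool.noConfusion hw
      refine ⟨z, hwz, ?_⟩
      rw [hQother z hzx hzu, hQother w hwx hwu, hzF, hw]; simp
  have hQv : Q v = false := by rw [hQother v hvx (Ne.symm huv), hvF]
  have hIu : Integrated G Q u := ⟨v, hadj, by rw [hQv, hQu]; simp⟩
  have hIv : Integrated G Q v := ⟨u, hadj.symm, by rw [hQv, hQu]; simp⟩
  -- counting
  set A := Finset.univ.filter (fun w => Integrated G P w) with hA
  set B := Finset.univ.filter (fun w => Integrated G Q w) with hB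
  have hsub : insert u (insert v (A.erase x)) ⊆ B := by
    intro w hw
    simp only [Finset.mem_insert, Finset.mem_erase, hA, Finset.mem_filter,
      Finset.mem_univ, true_and] at hw
    rcases hw with rfl | rfl | ⟨hwx, hwI⟩
    · simp [hB, hIu]
    · simp [hB, hIv]
    · simp only [hB, Finset.mem_filter, Finset.mem_univ, true_and]
      exact hkeep w hwx hwI
  have huA : u ∉ A := by simp [hA, hnu]
  have hvA : v ∉ A := by simp [hA, hnv]
  have hcard : (insert u (insert v (A.erase x))).card = (A.erase x).card + 2 := by
    rw [Finset.card_insert_of_notMem, Finset.card_insert_of_notMem]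
    · exact fun h => hvA (Finset.mem_of_mem_erase h)
    · intro h
      rcases Finset.mem_insert.mp h with h | h
      · exact huv h
      · exact huA (Finset.mem_of_mem_erase h)
  have h1 : A.card - 1 ≤ (A.erase x).card := Finset.pred_card_le_card_erase
  have h2 : (insert u (insert v (A.erase x))).card ≤ B.card := Finset.card_le_card hsub
  have hle : IoA G Q ≤ IoA G P := hsat x u hxT huF
  have hAI : IoA G P = A.card := rfl
  have hBI : IoA G Q = B.card := rfl
  omega
end

section
/- For every real z ∈ [−1, 1], arccos(z)/π ≥ α_GW · (1 − z)/2, where α_GW = min over θ ∈ (0, π] of (2/π)·θ/(1 − cos θ); in particular arccos(z)/π ≥ 0.878 · (1 − z)/2. -/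
open Real

lemma aux_sin_lb : ∀ x : ℝ, 0 ≤ x → x - x^3/6 ≤ Real.sin x := by
  have hmono : MonotoneOn (fun y : ℝ => Real.sin y - (y - y^3/6)) (Set.Ici 0) := by
    apply monotoneOn_of_deriv_nonneg (convex_Ici 0)
    · fun_prop
    · fun_prop
    · intro y _
      have hd : HasDerivAt (fun y : ℝ => Real.sin y - (y - y^3/6))
          (Real.cos y - (1 - 3*y^2/6)) y := by
        have h1 := Real.hasDerivAt_sin y
        have h2 : HasDerivAt (fun y : ℝ => y - y^3/6) (1 - 3*y^2/6) y := by
          have := ((hasDerivAt_pow 3 y).div_const 6)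
          have := (hasDerivAt_id y).sub this
          simpa [Pi.sub_def] using this
        exact h1.sub h2
      rw [hd.deriv]
      have := Real.one_sub_sq_div_two_le_cos (x := y)
      nlinarith [this]
  intro x hx
  have := hmono (Set.self_mem_Ici) (Set.mem_Ici.2 hx) hx
  simp at this
  linarith

lemma aux_cos_ub : ∀ x : ℝ, 0 ≤ x → Real.cos x ≤ 1 - x^2/2 + x^4/24 := by
  have hmono : MonotoneOn (fun y : ℝ => (1 - y^2/2 + y^4/24) - Real.cos y) (Set.Ici 0) := by
    apply monotoneOn_of_deriv_nonneg (convex_Ici 0)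
    · fun_prop
    · fun_prop
    · intro y hy
      have hy0 : (0:ℝ) ≤ y := le_of_lt (by simpa using hy)
      have hd : HasDerivAt (fun y : ℝ => (1 - y^2/2 + y^4/24) - Real.cos y)
          ((0 - 2*y^1/2 + 4*y^3/24) - (-Real.sin y)) y := by
        have h2 : HasDerivAt (fun y : ℝ => 1 - y^2/2 + y^4/24) (0 - 2*y^1/2 + 4*y^3/24) y := by
          have ha := ((hasDerivAt_pow 2 y).div_const 2)
          have hb := ((hasDerivAt_pow 4 y).div_const 24)
          have := ((hasDerivAt_const y (1:ℝ)).sub ha).add hb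
          simpa [Pi.sub_def, Pi.add_def] using this
        exact h2.sub (Real.hasDerivAt_cos y)
      rw [hd.deriv]
      have := aux_sin_lb y hy0
      nlinarith [this]
  intro x hx
  have := hmono (Set.self_mem_Ici) (Set.mem_Ici.2 hx) hx
  simp at this
  linarith [Real.cos_zero]

lemma aux_key : ∀ θ : ℝ, 0 ≤ θ → θ ≤ Real.pi → 0.439 * Real.pi * (1 - Real.cos θ) ≤ θ := by
  intro θ hθ0 hθπ
  have hπl := Real.pi_gt_d6
  have hπu := Real.pi_lt_d6
  rcases le_or_gt θ 1.45 with hc | hc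
  · have h1 := Real.one_sub_sq_div_two_le_cos (x := θ)
    nlinarith [mul_nonneg hθ0 hθ0, mul_nonneg (mul_nonneg hθ0 hθ0) hθ0,
      mul_nonneg hθ0 (sub_nonneg.2 hc), sq_nonneg θ,
      mul_le_mul_of_nonneg_left h1 (by positivity : (0:ℝ) ≤ 0.439 * Real.pi)]
  · set s : ℝ := Real.pi - θ with hs
    have hs0 : 0 ≤ s := by simp only [hs]; linarith
    have hsL : s ≤ 1.691593 := by simp only [hs]; linarith
    have hcs : Real.cos θ = -Real.cos s := by
      have := Real.cos_pi_sub θ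
      simp only [hs]; linarith
    have hq := aux_cos_ub s hs0
    rw [hcs]
    have hX : (0:ℝ) ≤ 0.122 + 0.2195 * s^2 - 0.439 * s^4/24 := by
      nlinarith [sq_nonneg s, sq_nonneg (s*s), mul_nonneg hs0 (sub_nonneg.2 hsL)]
    have hπX : 3.141592 * (0.122 + 0.2195 * s^2 - 0.439 * s^4/24) ≤
        Real.pi * (0.122 + 0.2195 * s^2 - 0.439 * s^4/24) :=
      mul_le_mul_of_nonneg_right hπl.le hX
    have hpoly : s ≤ 3.141592 * (0.122 + 0.2195 * s^2 - 0.439 * s^4/24) := by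
      nlinarith [sq_nonneg (s - 0.8155), mul_nonneg (mul_nonneg hs0 hs0) (sub_nonneg.2 hsL),
        mul_nonneg hs0 (sub_nonneg.2 hsL), sq_nonneg (s*s - 0.665),
        mul_nonneg (mul_nonneg hs0 hs0) hs0,
        mul_nonneg (mul_nonneg hs0 hs0) (sq_nonneg (s - 0.8155)),
        mul_nonneg (sub_nonneg.2 hsL) (sq_nonneg (s - 0.8155))]
    have h1 : 0.439*Real.pi*Real.cos s ≤ 0.439*Real.pi*(1 - s^2/2 + s^4/24) :=
      mul_le_mul_of_nonneg_left hq (by positivity)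
    have h2 : s ≤ Real.pi * (0.122 + 0.2195 * s^2 - 0.439*s^4/24) := le_trans hpoly hπX
    nlinarith [h1, h2]

/-- For every `z ∈ [-1,1]`, `arccos z / π ≥ α_GW · (1-z)/2`, where `α_GW` is the
Goemans–Williamson constant; in particular `arccos z / π ≥ 0.878 · (1-z)/2`. -/
theorem stmt9 (αGW : ℝ)
    (hαGW : αGW = sInf {r : ℝ | ∃ θ : ℝ, 0 < θ ∧ θ ≤ Real.pi ∧
      r = (2 / Real.pi) * θ / (1 - Real.cos θ)}) :
    ∀ z : ℝ, -1 ≤ z → z ≤ 1 →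
      αGW * ((1 - z) / 2) ≤ Real.arccos z / Real.pi ∧
      (0.878 : ℝ) * ((1 - z) / 2) ≤ Real.arccos z / Real.pi := by
  intro z hz1 hz2
  have hπ := Real.pi_pos
  have hθ0 : 0 ≤ Real.arccos z := Real.arccos_nonneg z
  have hθπ : Real.arccos z ≤ Real.pi := Real.arccos_le_pi z
  have hcos : Real.cos (Real.arccos z) = z := Real.cos_arccos hz1 hz2
  constructor
  · rcases eq_or_lt_of_le hz2 with h1 | h1
    · rw [h1]
      simp [Real.arccos_one]
    · have hpos : 0 < Real.arccos z := Real.arccos_pos.2 h1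
      have h1z : 0 < 1 - z := by linarith
      have hbdd : BddBelow {r : ℝ | ∃ θ : ℝ, 0 < θ ∧ θ ≤ Real.pi ∧
          r = (2 / Real.pi) * θ / (1 - Real.cos θ)} := by
        refine ⟨0, fun r hr => ?_⟩
        obtain ⟨θ, hθ1, _, rfl⟩ := hr
        have hden : (0:ℝ) ≤ 1 - Real.cos θ := by
          have := Real.cos_le_one θ; linarith
        have hnum : (0:ℝ) ≤ (2 / Real.pi) * θ := by positivity
        exact div_nonneg hnum hden
      have hmem : (2 / Real.pi) * Real.arccos z / (1 - z) ∈ {r : ℝ | ∃ θ : ℝ, 0 < θ ∧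
          θ ≤ Real.pi ∧ r = (2 / Real.pi) * θ / (1 - Real.cos θ)} :=
        ⟨Real.arccos z, hpos, hθπ, by rw [hcos]⟩
      have hle : αGW ≤ (2 / Real.pi) * Real.arccos z / (1 - z) := by
        rw [hαGW]; exact csInf_le hbdd hmem
      calc αGW * ((1 - z) / 2)
          ≤ ((2 / Real.pi) * Real.arccos z / (1 - z)) * ((1 - z) / 2) :=
            mul_le_mul_of_nonneg_right hle (by positivity)
        _ = Real.arccos z / Real.pi := by
            field_simp
  · have hk := aux_key (Real.arccos z) hθ0 hθπ
    rw [hcos] at hk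
    rw [le_div_iff₀ hπ]
    nlinarith [hk]
end

section
/- Let f(S) denote the number of integrated vertices when the vertices of S ⊆ V are assigned type 1 and V∖S type 2. In the greedy size-fixing procedure that repeatedly removes from V_1 the vertex whose removal maximizes f, each step satisfies f(V_1^{(t+1)})/|V_1^{(t+1)}| ≥ f(V_1^{(t)})/|V_1^{(t)}|, and hence after T steps f(V_1^{(T)})/|V_1^{(T)}| ≥ f(V_1)/|V_1|. -/
open Finset
open scoped Classical

variable {V : Type*}

/-- `fObj G S` is the number of integrated vertices when the vertices of `S` are
assigned type 1 and those of `V \ S` type 2. -/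
noncomputable def fObj (G : SimpleGraph V) [Fintype V] [DecidableEq V]
    (S : Finset V) : ℕ :=
  IoA G (fun v => decide (v ∈ S))

noncomputable def ISet (G : SimpleGraph V) [Fintype V] [DecidableEq V]
    (S : Finset V) : Finset V :=
  Finset.univ.filter fun v => Integrated G (fun v => decide (v ∈ S)) v

lemma fObj_eq (G : SimpleGraph V) [Fintype V] [DecidableEq V] (S : Finset V) :
    fObj G S = (ISet G S).card := rfl

lemma mem_ISet (G : SimpleGraph V) [Fintype V] [DecidableEq V] {S : Finset V} {v : V} :
    v ∈ ISet G S ↔ ∃ u, G.Adj v u ∧ ¬ (u ∈ S ↔ v ∈ S) := by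
  simp [ISet, Integrated, decide_eq_decide]

lemma key (G : SimpleGraph V) [Fintype V] [DecidableEq V] (S : Finset V) :
    S.card * fObj G S ≤ fObj G S + ∑ j ∈ S, fObj G (S.erase j) := by
  set L : V → Finset V := fun j => ISet G S \ ISet G (S.erase j) with hLdef
  have hL : ∀ j ∈ S, fObj G S ≤ fObj G (S.erase j) + (L j).card := by
    intro j _
    rw [fObj_eq, fObj_eq]
    calc (ISet G S).card ≤ (ISet G S \ ISet G (S.erase j)).card + (ISet G (S.erase j)).card :=
          Finset.card_le_card_sdiff_add_card
      _ = (ISet G (S.erase j)).card + (L j).card := by rw [Nat.add_comm]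
  have hdisj : ∀ x ∈ S, ∀ y ∈ S, x ≠ y → Disjoint (L x) (L y) := by
    intro x hx y hy hxy
    rw [Finset.disjoint_left]
    intro v hvx hvy
    simp only [hLdef, Finset.mem_sdiff] at hvx hvy
    obtain ⟨hvI, hvx⟩ := hvx
    obtain ⟨_, hvy⟩ := hvy
    rw [mem_ISet] at hvI
    obtain ⟨u, hadj, hne⟩ := hvI
    by_cases hvS : v ∈ S
    · have huS : u ∉ S := by tauto
      have hvx' : v = x := by
        by_contra h
        exact hvx ((mem_ISet G).2 ⟨u, hadj, by simp [Finset.mem_erase, h, hvS, huS]⟩)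
      have hvy' : v = y := by
        by_contra h
        exact hvy ((mem_ISet G).2 ⟨u, hadj, by simp [Finset.mem_erase, h, hvS, huS]⟩)
      exact hxy (hvx' ▸ hvy' ▸ rfl)
    · have huS : u ∈ S := by tauto
      have hvE : ∀ z, v ∉ S.erase z := fun z h => hvS (Finset.mem_of_mem_erase h)
      have hux : u = x := by
        by_contra h
        exact hvx ((mem_ISet G).2 ⟨u, hadj, by simp [Finset.mem_erase, h, huS, hvE x]⟩)
      have huy : u = y := by
        by_contra h
        exact hvy ((mem_ISet G).2 ⟨u, hadj, by simp [Finset.mem_erase, h, huS, hvE y]⟩)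
      exact hxy (hux ▸ huy ▸ rfl)
  have hsum : ∑ j ∈ S, (L j).card ≤ fObj G S := by
    rw [fObj_eq, ← Finset.card_biUnion hdisj]
    exact Finset.card_le_card (Finset.biUnion_subset.2 fun j _ => Finset.sdiff_subset)
  calc S.card * fObj G S = ∑ j ∈ S, fObj G S := by rw [Finset.sum_const, smul_eq_mul]
    _ ≤ ∑ j ∈ S, (fObj G (S.erase j) + (L j).card) := Finset.sum_le_sum hL
    _ = ∑ j ∈ S, fObj G (S.erase j) + ∑ j ∈ S, (L j).card := Finset.sum_add_distrib
    _ ≤ fObj G S + ∑ j ∈ S, fObj G (S.erase j) := by omega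

lemma greedy_step (G : SimpleGraph V) [Fintype V] [DecidableEq V] {S : Finset V} {i : V}
    (hi : i ∈ S) (hmax : ∀ j ∈ S, fObj G (S.erase j) ≤ fObj G (S.erase i)) :
    fObj G S * (S.erase i).card ≤ fObj G (S.erase i) * S.card := by
  have h1 := key G S
  have h2 : ∑ j ∈ S, fObj G (S.erase j) ≤ S.card * fObj G (S.erase i) := by
    calc ∑ j ∈ S, fObj G (S.erase j) ≤ ∑ _j ∈ S, fObj G (S.erase i) :=
          Finset.sum_le_sum hmax
      _ = S.card * fObj G (S.erase i) := by rw [Finset.sum_const, smul_eq_mul]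
  have hc : (S.erase i).card = S.card - 1 := Finset.card_erase_of_mem hi
  have hpos : 1 ≤ S.card := Finset.card_pos.2 ⟨i, hi⟩
  have h3 := h1.trans (Nat.add_le_add_left h2 _)
  obtain ⟨m, hm⟩ : ∃ m, S.card = m + 1 := ⟨S.card - 1, by omega⟩
  rw [hc, hm]
  rw [hm] at h3
  simp only [Nat.add_sub_cancel]
  nlinarith [h3]


/-- In the greedy size-fixing procedure, the ratio `f(V₁)/|V₁|` never decreases:
each greedy removal satisfies `f(V₁^{(t+1)})/|V₁^{(t+1)}| ≥ f(V₁^{(t)})/|V₁^{(t)}|`,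
and hence after `T` steps `f(V₁^{(T)})/|V₁^{(T)}| ≥ f(V₁)/|V₁|`
(stated with the ratios cross-multiplied). -/
theorem stmt12 [Fintype V] [DecidableEq V] (G : SimpleGraph V) (T : ℕ)
    (Vs : ℕ → Finset V) (hcard : T < (Vs 0).card)
    (hstep : ∀ t < T, ∃ i ∈ Vs t,
      Vs (t + 1) = (Vs t).erase i ∧
      ∀ j ∈ Vs t, fObj G ((Vs t).erase j) ≤ fObj G ((Vs t).erase i)) :
    (∀ t < T,
      fObj G (Vs t) * (Vs (t + 1)).card ≤ fObj G (Vs (t + 1)) * (Vs t).card) ∧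
    fObj G (Vs 0) * (Vs T).card ≤ fObj G (Vs T) * (Vs 0).card := by
  have hc : ∀ t ≤ T, (Vs t).card = (Vs 0).card - t := by
    intro t ht
    induction t with
    | zero => simp
    | succ n ih =>
      obtain ⟨i, hi, heq, _⟩ := hstep n (by omega)
      rw [heq, Finset.card_erase_of_mem hi, ih (by omega)]
      omega
  have hstep' : ∀ t < T,
      fObj G (Vs t) * (Vs (t + 1)).card ≤ fObj G (Vs (t + 1)) * (Vs t).card := by
    intro t ht
    obtain ⟨i, hi, heq, hmax⟩ := hstep t ht
    rw [heq]
    exact greedy_step G hi hmax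
  refine ⟨hstep', ?_⟩
  have main : ∀ t ≤ T, fObj G (Vs 0) * (Vs t).card ≤ fObj G (Vs t) * (Vs 0).card := by
    intro t ht
    induction t with
    | zero => exact le_rfl
    | succ n ih =>
      have hn := ih (by omega)
      have hs := hstep' n (by omega)
      have hpos : 0 < (Vs n).card := by
        rw [hc n (by omega)]; omega
      have h1 : fObj G (Vs 0) * (Vs (n + 1)).card * (Vs n).card ≤
          fObj G (Vs (n + 1)) * (Vs 0).card * (Vs n).card := by nlinarith
      exact Nat.le_of_mul_le_mul_right h1 hpos
  exact main T le_rfl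
end

section
/- Removing one vertex j from the type-1 set decreases the number of integrated vertices by at most η_j + 1, where η_j is the number of neighbors of j in V∖V_1 that have no neighbor in V_1 other than j. -/
open Finset
open scoped Classical

variable {V : Type*}

/-- Removing one vertex `j` from the type-1 set decreases the number of
integrated vertices by at most `η_j + 1`, where `η_j` is the number of type-2
neighbors of `j` having no type-1 neighbor other than `j`. -/
theorem stmt13 [Fintype V] [DecidableEq V] (G : SimpleGraph V)
    (V1 : Finset V) (j : V) (hj : j ∈ V1) :
    fObj G V1 ≤ fObj G (V1.erase j) +
      (Finset.univ.filter fun y =>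
        G.Adj j y ∧ y ∉ V1 ∧ ∀ x ∈ V1, G.Adj y x → x = j).card + 1 := by
  classical
  have hsub : (univ.filter fun v => Integrated G (fun v => decide (v ∈ V1)) v) ⊆
      (univ.filter fun v => Integrated G (fun v => decide (v ∈ V1.erase j)) v) ∪
      (univ.filter fun y => G.Adj j y ∧ y ∉ V1 ∧ ∀ x ∈ V1, G.Adj y x → x = j) ∪ {j} := by
    intro v hv
    simp only [mem_filter, mem_univ, true_and] at hv
    obtain ⟨u, hadj, hne⟩ := hv
    by_cases hvj : v = j
    · simp [hvj]
    simp only [mem_union, mem_filter, mem_univ, true_and, mem_singleton]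
    by_cases hvV : v ∈ V1
    · left; left
      refine ⟨u, hadj, ?_⟩
      have huV : u ∉ V1 := by
        intro h; simp [hvV, h] at hne
      have huj : u ≠ j := fun h => huV (h ▸ hj)
      simp [Finset.mem_erase, huV, hvV, hvj]
    · by_cases hint : Integrated G (fun v => decide (v ∈ V1.erase j)) v
      · left; left; exact hint
      · left; right
        have huV : u ∈ V1 := by
          by_contra h; simp [h, hvV] at hne
        have hall : ∀ x ∈ V1, G.Adj v x → x = j := by
          intro x hx hax
          by_contra hxj
          exact hint ⟨x, hax, by simp [Finset.mem_erase, hxj, hx, hvV, hvj]⟩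
        have huj : u = j := hall u huV hadj
        exact ⟨(huj ▸ hadj).symm, hvV, hall⟩
  calc fObj G V1 ≤ ((univ.filter fun v => Integrated G (fun v => decide (v ∈ V1.erase j)) v) ∪
      (univ.filter fun y => G.Adj j y ∧ y ∉ V1 ∧ ∀ x ∈ V1, G.Adj y x → x = j) ∪ ({j} : Finset V)).card :=
        card_le_card hsub
    _ ≤ ((univ.filter fun v => Integrated G (fun v => decide (v ∈ V1.erase j)) v) ∪
      (univ.filter fun y => G.Adj j y ∧ y ∉ V1 ∧ ∀ x ∈ V1, G.Adj y x → x = j)).card + 1 := by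
        refine le_trans (card_union_le _ _) ?_
        simp
    _ ≤ _ := by
        have := card_union_le (univ.filter fun v => Integrated G (fun v => decide (v ∈ V1.erase j)) v)
          (univ.filter fun y => G.Adj j y ∧ y ∉ V1 ∧ ∀ x ∈ V1, G.Adj y x → x = j)
        simp only [fObj, IoA]
        omega
end

section
/- Let P be a saturated assignment in which every type-1 vertex is integrated and suppose y is a non-integrated type-2 vertex and x is any type-1 vertex. Then |N(y) ∩ U_2(P)| ≤ |Γ_x(P)|, where U_2(P) is the set of non-integrated type-2 vertices and Γ_x(P) is the set of type-2 neighbors of x uniquely covered by x. -/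
open Finset
open scoped Classical

variable {V : Type*}

/-- `Gamma G P x`: the set of type-2 neighbors of the type-1 vertex `x` that are
uniquely covered by `x` (their only type-1 neighbor is `x`). -/
noncomputable def Gamma (G : SimpleGraph V) [Fintype V] (P : V → Bool)
    (x : V) : Finset V :=
  Finset.univ.filter fun z => G.Adj x z ∧ P z = false ∧
    ∀ x', G.Adj z x' → P x' = true → x' = x

/-- Subcase 2.1: for a saturated assignment in which every type-1 vertex is
integrated and every type-1 vertex uniquely covers some type-2 vertex, for every
non-integrated type-2 vertex `y` and every type-1 vertex `x`,
`|N(y) ∩ U₂(P)| ≤ |Γ_x(P)|`. -/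
theorem stmt15 [Fintype V] (G : SimpleGraph V) (P : V → Bool)
    (hsat : Saturated G P)
    (hall1 : ∀ x, P x = true → Integrated G P x)
    (hΓ : ∀ x', P x' = true → (Gamma G P x').Nonempty)
    (y : V) (hy : P y = false) (hyni : ¬ Integrated G P y)
    (x : V) (hx : P x = true) :
    (Finset.univ.filter fun z =>
        G.Adj y z ∧ P z = false ∧ ¬ Integrated G P z).card ≤
      (Gamma G P x).card := by
  classical
  set A : Finset V := Finset.univ.filter fun z =>
      G.Adj y z ∧ P z = false ∧ ¬ Integrated G P z with hA
  rcases A.eq_empty_or_nonempty with hAe | ⟨z0, hz0⟩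
  · simp [hAe]
  set P' : V → Bool := swapAssign P x y with hP'
  have hxy : x ≠ y := fun h => by rw [h, hy] at hx; exact Bool.noConfusion hx
  have hyadj : ∀ u, G.Adj y u → P u = false := by
    intro u hu
    by_contra h
    exact hyni ⟨u, hu, by rw [hy]; exact h⟩
  have hP'x : P' x = false := by simp [hP', swapAssign, hy]
  have hP'y : P' y = true := by simp [hP', swapAssign, hxy.symm, hx]
  have hP'o : ∀ u, u ≠ x → u ≠ y → P' u = P u := fun u h1 h2 => by
    simp [hP', swapAssign, h1, h2]
  set S : Finset V := Finset.univ.filter fun v => Integrated G P v with hS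
  set S' : Finset V := Finset.univ.filter fun v => Integrated G P' v with hS'
  have hcard : S'.card ≤ S.card := hsat x y hx hy
  have hdiff : (S' \ S).card ≤ (S \ S').card := by
    have e1 := Finset.card_sdiff_add_card_inter S' S
    have e2 := Finset.card_sdiff_add_card_inter S S'
    rw [Finset.inter_comm] at e2
    omega
  -- facts about z0
  obtain ⟨-, hz0adj, hz0f, hz0ni⟩ := Finset.mem_filter.mp hz0
  -- gains
  have hyA : y ∉ A := by
    intro h
    exact G.irrefl (Finset.mem_filter.mp h).2.1
  have hsub1 : insert y A ⊆ S' \ S := by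
    intro w hw
    rcases Finset.mem_insert.mp hw with rfl | hwA
    · refine Finset.mem_sdiff.mpr ⟨?_, ?_⟩
      · refine Finset.mem_filter.mpr ⟨Finset.mem_univ _, ⟨z0, hz0adj, ?_⟩⟩
        have hz0x : z0 ≠ x := fun h => by rw [h, hx] at hz0f; exact Bool.noConfusion hz0f
        have hz0y : z0 ≠ w := fun h => G.irrefl (h ▸ hz0adj)
        rw [hP'o z0 hz0x hz0y, hz0f, hP'y]
        simp
      · simp [hS, hyni]
    · have hw' := Finset.mem_filter.mp hwA
      obtain ⟨hadj, hPw, hwni⟩ := hw'.2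
      have hwx : w ≠ x := fun h => by rw [h, hx] at hPw; exact Bool.noConfusion hPw
      have hwy : w ≠ y := fun h => G.irrefl (h ▸ hadj)
      refine Finset.mem_sdiff.mpr ⟨?_, ?_⟩
      · refine Finset.mem_filter.mpr ⟨Finset.mem_univ _, ⟨y, hadj.symm, ?_⟩⟩
        rw [hP'o w hwx hwy, hPw, hP'y]
        simp
      · simp [hS, hwni]
  -- losses
  have hsub2 : S \ S' ⊆ insert x (Gamma G P x) := by
    intro w hw
    have hw' := Finset.mem_sdiff.mp hw
    have hint : Integrated G P w := (Finset.mem_filter.mp hw'.1).2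
    have hnint : ¬ Integrated G P' w := fun h =>
      hw'.2 (Finset.mem_filter.mpr ⟨Finset.mem_univ _, h⟩)
    by_cases hwx : w = x
    · exact Finset.mem_insert.mpr (Or.inl hwx)
    refine Finset.mem_insert.mpr (Or.inr ?_)
    obtain ⟨u, hu, hne⟩ := hint
    have hPw : P w = false := by
      cases hPwc : P w with
      | false => rfl
      | true =>
        exfalso
        have hPu : P u = false := by
          rw [hPwc] at hne
          cases h : P u with
          | false => rfl
          | true => exact absurd h hne
        have huy : u ≠ y := fun h => by
          rw [hyadj w (h ▸ hu).symm] at hPwc; exact Bool.noConfusion hPwc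
        have hwy : w ≠ y := fun h => by rw [h, hy] at hPwc; exact Bool.noConfusion hPwc
        have hP'u : P' u = false := by
          by_cases hux : u = x
          · rw [hux]; exact hP'x
          · rw [hP'o u hux huy]; exact hPu
        exact hnint ⟨u, hu, by rw [hP'u, hP'o w hwx hwy, hPwc]; simp⟩
    have hwy : w ≠ y := fun h => hyni (h ▸ ⟨u, hu, hne⟩)
    have hP'w : P' w = false := by rw [hP'o w hwx hwy]; exact hPw
    have hPu : P u = true := by
      rw [hPw] at hne
      cases h : P u with
      | true => rfl
      | false => exact absurd h hne
    have hux : u = x := by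
      by_contra hux
      have huy : u ≠ y := fun h => by rw [h, hy] at hPu; exact Bool.noConfusion hPu
      exact hnint ⟨u, hu, by rw [hP'o u hux huy, hPu, hP'w]; simp⟩
    refine Finset.mem_filter.mpr ⟨Finset.mem_univ _, (hux ▸ hu).symm, hPw, ?_⟩
    intro x'' hadj'' hPx''
    by_contra hne''
    have hx''y : x'' ≠ y := fun h => by rw [h, hy] at hPx''; exact Bool.noConfusion hPx''
    exact hnint ⟨x'', hadj'', by rw [hP'o x'' hne'' hx''y, hPx'', hP'w]; simp⟩
  have h1 : A.card + 1 ≤ (S' \ S).card := by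
    rw [← Finset.card_insert_of_notMem hyA]
    exact Finset.card_le_card hsub1
  have h2 : (S \ S').card ≤ (Gamma G P x).card + 1 :=
    le_trans (Finset.card_le_card hsub2) (Finset.card_insert_le _ _)
  omega
end
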